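/- Let T>0, a≥0, b>1, c>0, let e:[0,T]→ℝ be continuous, and set μ = 1/(b+1), so that 0<μ<1/2. If x:[0,T]→(0,∞) is twice continuously differentiable, satisfies x''(t)+a x'(t) = (e(t)/μ)x(t)^{1−2μ} − (c/μ)x(t)^{1−μ} for all t∈[0,T], x(0)=x(T) and x'(0)=x'(T), then u = x^μ is a positive twice continuously differentiable function on [0,T] satisfying u''(t)+a u'(t) = (1/u(t))·(e(t) − b·(u'(t))²) − c for all t∈[0,T], u(0)=u(T) and u'(0)=u'(T). -/

import Mathlib

open Set Real

noncomputable def pd1 (T : ℝ) (x : ℝ → ℝ) : ℝ → ℝ := derivWithin x (Set.Icc 0 T)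

noncomputable def pd2 (T : ℝ) (x : ℝ → ℝ) : ℝ → ℝ := derivWithin (pd1 T x) (Set.Icc 0 T)

theorem statement18 (T a b c μ : ℝ) (e : ℝ → ℝ)
    (hT : 0 < T) (ha : 0 ≤ a) (hb : 1 < b) (hc : 0 < c)
    (he : ContinuousOn e (Set.Icc 0 T))
    (hμ : μ = 1 / (b + 1))
    (x : ℝ → ℝ)
    (hxpos : ∀ t ∈ Set.Icc 0 T, 0 < x t)
    (hx : ContDiffOn ℝ 2 x (Set.Icc 0 T))
    (hode : ∀ t ∈ Set.Icc 0 T,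
      pd2 T x t + a * pd1 T x t =
        (e t / μ) * x t ^ (1 - 2 * μ) - (c / μ) * x t ^ (1 - μ))
    (hbc1 : x 0 = x T) (hbc2 : pd1 T x 0 = pd1 T x T) :
    (∀ t ∈ Set.Icc 0 T, 0 < x t ^ μ) ∧
    ContDiffOn ℝ 2 (fun t => x t ^ μ) (Set.Icc 0 T) ∧
    (∀ t ∈ Set.Icc 0 T,
      pd2 T (fun t => x t ^ μ) t + a * pd1 T (fun t => x t ^ μ) t =
        (1 / x t ^ μ) * (e t - b * (pd1 T (fun t => x t ^ μ) t) ^ 2) - c) ∧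
    x 0 ^ μ = x T ^ μ ∧
    pd1 T (fun t => x t ^ μ) 0 = pd1 T (fun t => x t ^ μ) T := by
  have hb1 : b + 1 ≠ 0 := by nlinarith
  have hμ0 : μ ≠ 0 := by rw [hμ]; positivity
  have hs : UniqueDiffOn ℝ (Set.Icc (0:ℝ) T) := uniqueDiffOn_Icc hT
  have hxd : DifferentiableOn ℝ x (Set.Icc 0 T) := hx.differentiableOn two_ne_zero
  have hx' : ∀ t ∈ Set.Icc (0:ℝ) T, HasDerivWithinAt x (pd1 T x t) (Set.Icc 0 T) t :=
    fun t ht => (hxd t ht).hasDerivWithinAt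
  have hxd2 : DifferentiableOn ℝ (pd1 T x) (Set.Icc 0 T) :=
    (hx.derivWithin hs (by norm_num : (1:WithTop ℕ∞) + 1 ≤ 2)).differentiableOn one_ne_zero
  have hx'' : ∀ t ∈ Set.Icc (0:ℝ) T, HasDerivWithinAt (pd1 T x) (pd2 T x t) (Set.Icc 0 T) t :=
    fun t ht => (hxd2 t ht).hasDerivWithinAt
  have hu' : ∀ t ∈ Set.Icc (0:ℝ) T,
      HasDerivWithinAt (fun t => x t ^ μ) (pd1 T x t * μ * x t ^ (μ - 1)) (Set.Icc 0 T) t :=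
    fun t ht => (hx' t ht).rpow_const (Or.inl (ne_of_gt (hxpos t ht)))
  have hu1 : ∀ t ∈ Set.Icc (0:ℝ) T,
      pd1 T (fun t => x t ^ μ) t = pd1 T x t * μ * x t ^ (μ - 1) :=
    fun t ht => (hu' t ht).derivWithin (hs t ht)
  have hg' : ∀ t ∈ Set.Icc (0:ℝ) T,
      HasDerivWithinAt (fun t => pd1 T x t * μ * x t ^ (μ - 1))
        (pd2 T x t * μ * x t ^ (μ - 1) +
          pd1 T x t * μ * (pd1 T x t * (μ - 1) * x t ^ (μ - 1 - 1))) (Set.Icc 0 T) t := by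
    intro t ht
    exact ((hx'' t ht).mul_const μ).mul
      ((hx' t ht).rpow_const (Or.inl (ne_of_gt (hxpos t ht))))
  have hu2 : ∀ t ∈ Set.Icc (0:ℝ) T,
      pd2 T (fun t => x t ^ μ) t = pd2 T x t * μ * x t ^ (μ - 1) +
          pd1 T x t * μ * (pd1 T x t * (μ - 1) * x t ^ (μ - 1 - 1)) := by
    intro t ht
    have : pd2 T (fun t => x t ^ μ) t
        = derivWithin (fun t => pd1 T x t * μ * x t ^ (μ - 1)) (Set.Icc 0 T) t := by
      unfold pd2
      exact derivWithin_congr hu1 (hu1 t ht)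
    rw [this, (hg' t ht).derivWithin (hs t ht)]
  refine ⟨fun t ht => rpow_pos_of_pos (hxpos t ht) μ,
    fun t ht => (hx t ht).rpow_const_of_ne (ne_of_gt (hxpos t ht)), ?_,
    by rw [hbc1], by rw [hu1 0 (Set.left_mem_Icc.2 hT.le), hu1 T (Set.right_mem_Icc.2 hT.le),
      hbc1, hbc2]⟩
  intro t ht
  have hX := hxpos t ht
  rw [hu1 t ht, hu2 t ht]
  have hode' := hode t ht
  set X := x t
  set v := pd1 T x t
  set w := pd2 T x t
  have h1 : X ^ (1 - 2*μ) * X ^ (μ - 1) = X ^ (-μ) := by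
    rw [← rpow_add hX]; ring_nf
  have h2 : X ^ (1 - μ) * X ^ (μ - 1) = 1 := by
    rw [← rpow_add hX]; norm_num
  have h3 : X ^ (-μ) * (X ^ (μ - 1)) ^ 2 = X ^ (μ - 1 - 1) := by
    rw [sq, ← rpow_add hX, ← rpow_add hX]; ring_nf
  have hinv : 1 / X ^ μ = X ^ (-μ) := by
    rw [rpow_neg hX.le, one_div]
  have hmul : μ * (b + 1) = 1 := by rw [hμ]; field_simp
  have hμb : μ * (μ - 1) = -(b * μ^2) := by linear_combination μ * hmul
  have hode2 : μ * w + μ * (a * v) = e t * X ^ (1 - 2*μ) - c * X ^ (1 - μ) := by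
    have h4 : e t / μ * X ^ (1 - 2*μ) - c / μ * X ^ (1 - μ)
        = (e t * X ^ (1 - 2*μ) - c * X ^ (1 - μ)) / μ := by ring
    rw [h4] at hode'
    field_simp at hode'
    linear_combination hode'
  rw [hinv]
  linear_combination X ^ (μ - 1) * hode2 + e t * h1 - c * h2
    + v^2 * X ^ (μ - 1 - 1) * hμb + b * μ^2 * v^2 * h3
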